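/- arXiv:1902.05640 — 3 statements merged into one kernel-verified Lean document; each statement's English description precedes it below -/
import Mathlib

section
/- Let K ≥ 2 and let γ ∈ ℝ^K be a normalized rate vector (γ_k ≥ 0 for all k and Σ_k γ_k = 1). Then the ℓ1-based fairness measure F(γ) = 1 − (K/(2(K−1)))·‖γ − e‖₁ satisfies 0 ≤ F(γ) ≤ 1. -/
/-- For a normalized rate vector `γ` with `K ≥ 2`, the ℓ1-based fairness
measure `F(γ) = 1 − (K/(2(K−1)))‖γ − e‖₁` satisfies `0 ≤ F(γ) ≤ 1`. -/
theorem l1_fairness_range (K : ℕ) (hK : 2 ≤ K) (γ : Fin K → ℝ)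
    (hnonneg : ∀ k, 0 ≤ γ k) (hsum : ∑ k, γ k = 1) :
    0 ≤ 1 - (K : ℝ) / (2 * ((K : ℝ) - 1)) * ∑ k, |γ k - (1 : ℝ) / K| ∧
      1 - (K : ℝ) / (2 * ((K : ℝ) - 1)) * ∑ k, |γ k - (1 : ℝ) / K| ≤ 1 := by
  have hK2 : (2:ℝ) ≤ (K:ℝ) := by exact_mod_cast hK
  have hKpos : (0:ℝ) < K := by linarith
  have hc : (0:ℝ) ≤ (K : ℝ) / (2 * ((K : ℝ) - 1)) := by
    apply div_nonneg <;> linarith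
  have hγle : ∀ k, γ k ≤ 1 := by
    intro k
    calc γ k ≤ ∑ j, γ j := Finset.single_le_sum (fun j _ => hnonneg j) (Finset.mem_univ k)
    _ = 1 := hsum
  have hterm : ∀ k, |γ k - (1:ℝ)/K| ≤ 2*(1 - 1/K)*γ k - (γ k - 1/K) := by
    intro k
    have h1 : (0:ℝ) < 1/K := by positivity
    have h2 : γ k * (1/K) ≤ 1 * (1/K) :=
      mul_le_mul_of_nonneg_right (hγle k) (le_of_lt h1)
    have h3 : 0 ≤ γ k * (1/K) := mul_nonneg (hnonneg k) (le_of_lt h1)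
    have h4 : (0:ℝ) ≤ 1 - 1/K := by
      rw [sub_nonneg, div_le_one hKpos]; linarith
    rcases abs_cases (γ k - (1:ℝ)/K) with ⟨he, _⟩ | ⟨he, _⟩ <;> rw [he] <;> nlinarith [hnonneg k, mul_nonneg (hnonneg k) h4]
  have hsumle : ∑ k, |γ k - (1:ℝ)/K| ≤ 2*(1 - 1/K) := by
    calc ∑ k, |γ k - (1:ℝ)/K| ≤ ∑ k, (2*(1 - 1/K)*γ k - (γ k - 1/K)) :=
          Finset.sum_le_sum (fun k _ => hterm k)
    _ = 2*(1 - 1/K) * (∑ k, γ k) - ((∑ k, γ k) - K * (1/K)) := by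
          rw [Finset.sum_sub_distrib, Finset.sum_sub_distrib, ← Finset.mul_sum,
            Finset.sum_const, Finset.card_univ, Fintype.card_fin, nsmul_eq_mul]
    _ = 2*(1 - 1/K) := by
          rw [hsum]; field_simp; ring
  have hsumnn : (0:ℝ) ≤ ∑ k, |γ k - (1:ℝ)/K| :=
    Finset.sum_nonneg (fun k _ => abs_nonneg _)
  constructor
  · have : (K : ℝ) / (2 * ((K : ℝ) - 1)) * ∑ k, |γ k - (1:ℝ)/K|
        ≤ (K : ℝ) / (2 * ((K : ℝ) - 1)) * (2*(1 - 1/K)) :=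
      mul_le_mul_of_nonneg_left hsumle hc
    have heq : (K : ℝ) / (2 * ((K : ℝ) - 1)) * (2*(1 - 1/K)) = 1 := by
      rw [div_mul_eq_mul_div, div_eq_one_iff_eq (by nlinarith : (2*((K:ℝ)-1)) ≠ 0)]
      field_simp
    linarith
  · nlinarith [mul_nonneg hc hsumnn]
end

section
/- (Theorem) Let K ≥ 2 and let γ ∈ ℝ^K be a normalized rate vector (γ_k ≥ 0 for all k and Σ_k γ_k = 1), with e = (1/K, …, 1/K). Set t = √(K‖γ‖₂² − 1) (which equals |tan θ| for the angle θ between γ and e). Then the deviation of the ℓ1-based fairness measure from 1 satisfies the two-sided bound (√K/(2(K−1)))·t ≤ 1 − F(γ) ≤ (K/(2(K−1)))·t, so that F(γ) = 1 − Θ(tan θ) as θ → 0. -/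
/-- Theorem: For a normalized rate vector `γ` with `K ≥ 2`, set
`t = √(K‖γ‖₂² − 1)` (which equals `|tan θ|` for the angle `θ` between `γ` and
`e = (1/K,…,1/K)`).  Then the deviation of the ℓ1-based fairness measure
`F(γ) = 1 − (K/(2(K−1)))‖γ − e‖₁` from 1 satisfies the two-sided bound
`(√K/(2(K−1)))·t ≤ 1 − F(γ) ≤ (K/(2(K−1)))·t`, so `F(γ) = 1 − Θ(tan θ)` as `θ → 0`. -/
theorem l1_fairness_theta_tan (K : ℕ) (hK : 2 ≤ K) (γ : Fin K → ℝ)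
    (hnonneg : ∀ k, 0 ≤ γ k) (hsum : ∑ k, γ k = 1)
    (t : ℝ) (ht : t = Real.sqrt ((K : ℝ) * (∑ k, (γ k) ^ 2) - 1)) :
    Real.sqrt K / (2 * ((K : ℝ) - 1)) * t ≤
        1 - (1 - (K : ℝ) / (2 * ((K : ℝ) - 1)) * ∑ k, |γ k - (1 : ℝ) / K|) ∧
      1 - (1 - (K : ℝ) / (2 * ((K : ℝ) - 1)) * ∑ k, |γ k - (1 : ℝ) / K|) ≤
        (K : ℝ) / (2 * ((K : ℝ) - 1)) * t := by
  have hK0 : (0 : ℝ) < K := by positivity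
  have hKne : (K : ℝ) ≠ 0 := ne_of_gt hK0
  have hK1 : (0 : ℝ) < (K : ℝ) - 1 := by
    have : (2 : ℝ) ≤ K := by exact_mod_cast hK
    linarith
  set d : Fin K → ℝ := fun k => γ k - 1 / K with hd
  set A : ℝ := ∑ k, |d k| with hA
  set Q : ℝ := ∑ k, (d k) ^ 2 with hQ
  have hQdef : (K : ℝ) * (∑ k, (γ k) ^ 2) - 1 = (K : ℝ) * Q := by
    have hcard : (Finset.univ : Finset (Fin K)).card = K := by simp
    have hQ' : Q = (∑ k, (γ k) ^ 2) - 1 / K := by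
      simp only [hQ, hd, sub_sq]
      rw [Finset.sum_add_distrib, Finset.sum_sub_distrib]
      rw [← Finset.sum_mul, ← Finset.mul_sum] at *
      rw [hsum]
      simp only [Finset.sum_const, Finset.card_univ, Fintype.card_fin, nsmul_eq_mul]
      field_simp
      ring
    rw [hQ']
    field_simp
  have hQnn : 0 ≤ Q := Finset.sum_nonneg fun k _ => sq_nonneg _
  have hAnn : 0 ≤ A := Finset.sum_nonneg fun k _ => abs_nonneg _
  have htval : t = Real.sqrt K * Real.sqrt Q := by
    rw [ht, hQdef, Real.sqrt_mul (le_of_lt hK0)]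
  -- lower bound: √Q ≤ A
  have hQA : Q ≤ A ^ 2 := by
    calc Q = ∑ k, |d k| ^ 2 := by simp [hQ, sq_abs]
    _ ≤ (∑ k, |d k|) ^ 2 := by
        apply Finset.sum_sq_le_sq_sum_of_nonneg
        intro k _
        exact abs_nonneg _
  have hsqrtQ_le_A : Real.sqrt Q ≤ A := by
    have : Real.sqrt Q ≤ Real.sqrt (A ^ 2) := Real.sqrt_le_sqrt hQA
    rwa [Real.sqrt_sq hAnn] at this
  -- upper bound: A² ≤ K Q (Cauchy–Schwarz)
  have hAQ : A ^ 2 ≤ (K : ℝ) * Q := by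
    have h := sq_sum_le_card_mul_sum_sq (s := (Finset.univ : Finset (Fin K)))
      (f := fun k => |d k|)
    simpa [sq_abs] using h
  have hA_le_t : A ≤ t := by
    rw [htval]
    have : Real.sqrt (A ^ 2) ≤ Real.sqrt ((K : ℝ) * Q) := Real.sqrt_le_sqrt hAQ
    rwa [Real.sqrt_sq hAnn, Real.sqrt_mul (le_of_lt hK0)] at this
  have hc : (0 : ℝ) < 2 * ((K : ℝ) - 1) := by linarith
  constructor
  · have h1 : Real.sqrt K * t ≤ (K : ℝ) * A := by
      rw [htval]
      have hsK : Real.sqrt K * Real.sqrt K = (K : ℝ) := Real.mul_self_sqrt (le_of_lt hK0)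
      calc Real.sqrt K * (Real.sqrt K * Real.sqrt Q)
          = (K : ℝ) * Real.sqrt Q := by rw [← mul_assoc, hsK]
        _ ≤ (K : ℝ) * A := by
            apply mul_le_mul_of_nonneg_left hsqrtQ_le_A (le_of_lt hK0)
    calc Real.sqrt K / (2 * ((K : ℝ) - 1)) * t
        = Real.sqrt K * t / (2 * ((K : ℝ) - 1)) := by ring
      _ ≤ (K : ℝ) * A / (2 * ((K : ℝ) - 1)) := by gcongr
      _ = (K : ℝ) / (2 * ((K : ℝ) - 1)) * A := by ring
      _ = 1 - (1 - (K : ℝ) / (2 * ((K : ℝ) - 1)) * A) := by ring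
  · have h2 : (K : ℝ) * A ≤ (K : ℝ) * t := mul_le_mul_of_nonneg_left hA_le_t (le_of_lt hK0)
    calc 1 - (1 - (K : ℝ) / (2 * ((K : ℝ) - 1)) * A)
        = (K : ℝ) * A / (2 * ((K : ℝ) - 1)) := by ring
      _ ≤ (K : ℝ) * t / (2 * ((K : ℝ) - 1)) := by gcongr
      _ = (K : ℝ) / (2 * ((K : ℝ) - 1)) * t := by ring
end

section
/- (Nash standard for proportional fairness, eqs. (17)-(18)) Let S ⊆ ℝ^K be a convex set and for each k let R_k : S → ℝ be a concave function that is strictly positive on S. Suppose p* ∈ S maximizes Σ_{k=1}^K log(R_k(p)) over S. Then for every p ∈ S, the aggregate proportional change is nonpositive: Σ_{k=1}^K (R_k(p) − R_k(p*)) / R_k(p*) ≤ 0. -/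
/-- Nash standard for proportional fairness, eqs. (17)-(18): Let
`S ⊆ ℝ^K` be convex and let each rate function `R k : S → ℝ` be concave and strictly
positive on `S`.  If `p*` maximizes `∑ k, log(R k p)` over `S`, then for every `p ∈ S`
the aggregate proportional change is nonpositive:
`∑ k, (R k p − R k p*) / (R k p*) ≤ 0`. -/
theorem nash_standard_proportional_fairness (K : ℕ) (hK : 1 ≤ K)
    (S : Set (Fin K → ℝ)) (hS : Convex ℝ S)
    (R : Fin K → (Fin K → ℝ) → ℝ)
    (hconc : ∀ k, ConcaveOn ℝ S (R k))
    (hpos : ∀ k, ∀ p ∈ S, 0 < R k p)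
    (pstar : Fin K → ℝ) (hpstar : pstar ∈ S)
    (hmax : ∀ p ∈ S, ∑ k, Real.log (R k p) ≤ ∑ k, Real.log (R k pstar)) :
    ∀ p ∈ S, ∑ k, (R k p - R k pstar) / R k pstar ≤ 0 := by
  intro p hp
  have hRs : ∀ k, 0 < R k pstar := fun k => hpos k pstar hpstar
  set a : Fin K → ℝ := fun k => (R k p - R k pstar) / R k pstar with ha
  set g : ℝ → ℝ := fun t => ∑ k, Real.log (1 + t * a k) with hg
  -- positivity of 1 + t * a k for t ∈ [0,1]
  have hpos' : ∀ t ∈ Set.Icc (0:ℝ) 1, ∀ k, 0 < 1 + t * a k := by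
    intro t ⟨ht0, ht1⟩ k
    have hfact : (1 - t) * R k pstar + t * R k p = R k pstar * (1 + t * a k) := by
      field_simp [ha, (hRs k).ne']
      have e : R k pstar * a k = R k p - R k pstar := by simp only [ha]; field_simp [(hRs k).ne']
      linear_combination (-t) * e
    have h1 : 0 < (1 - t) * R k pstar + t * R k p := by
      rcases le_total (R k pstar) (R k p) with h | h
      · nlinarith [mul_nonneg ht0 (sub_nonneg.mpr h), hRs k]
      · nlinarith [mul_nonneg (by linarith : (0:ℝ) ≤ 1 - t) (sub_nonneg.mpr h), hpos k p hp]
    nlinarith [hRs k, hfact ▸ h1]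
  -- g t ≤ 0 on [0,1]
  have hkey : ∀ t ∈ Set.Icc (0:ℝ) 1, g t ≤ 0 := by
    intro t ht
    obtain ⟨ht0, ht1⟩ := ht
    have hmem : (1 - t) • pstar + t • p ∈ S := hS hpstar hp (by linarith) ht0 (by ring)
    have h2 : ∀ k, Real.log (1 + t * a k) ≤
        Real.log (R k ((1 - t) • pstar + t • p)) - Real.log (R k pstar) := by
      intro k
      have hcomb : (1 - t) * R k pstar + t * R k p ≤ R k ((1 - t) • pstar + t • p) :=
        (hconc k).2 hpstar hp (by linarith) ht0 (by ring)
      have hfact : (1 - t) * R k pstar + t * R k p = R k pstar * (1 + t * a k) := by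
        field_simp [ha, (hRs k).ne']
        have e : R k pstar * a k = R k p - R k pstar := by simp only [ha]; field_simp [(hRs k).ne']
        linear_combination (-t) * e
      have hlog : Real.log (R k pstar * (1 + t * a k)) ≤
          Real.log (R k ((1 - t) • pstar + t • p)) := by
        apply Real.log_le_log (mul_pos (hRs k) (hpos' t ⟨ht0, ht1⟩ k))
        rw [← hfact]; exact hcomb
      rw [Real.log_mul (hRs k).ne' (hpos' t ⟨ht0, ht1⟩ k).ne'] at hlog
      linarith
    calc g t ≤ ∑ k, (Real.log (R k ((1 - t) • pstar + t • p)) - Real.log (R k pstar)) :=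
          Finset.sum_le_sum fun k _ => h2 k
      _ = (∑ k, Real.log (R k ((1 - t) • pstar + t • p))) - ∑ k, Real.log (R k pstar) := by
          rw [Finset.sum_sub_distrib]
      _ ≤ 0 := by linarith [hmax _ hmem]
  -- derivative of g at 0
  have hderiv : HasDerivAt g (∑ k, a k) 0 := by
    apply HasDerivAt.fun_sum
    intro k _
    have h1 : HasDerivAt (fun t : ℝ => 1 + t * a k) (a k) 0 := by
      simpa using ((hasDerivAt_id (0:ℝ)).mul_const (a k)).const_add 1
    have := h1.log (by norm_num)
    simpa using this
  have hslope : Filter.Tendsto (slope g 0) (nhdsWithin 0 (Set.Ioi 0)) (nhds (∑ k, a k)) :=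
    (hasDerivAt_iff_tendsto_slope.mp hderiv).mono_left
      (nhdsWithin_mono _ (fun x hx => ne_of_gt hx))
  have hle : ∀ᶠ t in nhdsWithin (0:ℝ) (Set.Ioi 0), slope g 0 t ≤ 0 := by
    filter_upwards [Ioc_mem_nhdsGT_of_mem (Set.left_mem_Ico.mpr one_pos)] with t ht
    have hg0 : g 0 = 0 := by simp [hg]
    have hgt := hkey t ⟨ht.1.le, ht.2⟩
    rw [slope_def_field, hg0]
    simp only [sub_zero]
    exact div_nonpos_of_nonpos_of_nonneg hgt ht.1.le
  have hfinal : ∑ k, a k ≤ 0 := le_of_tendsto hslope hle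
  exact hfinal
end
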